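/- Let α ≥ 1. If a class C of probability distributions over a countable domain X is η-additive α-robustly learnable for every η ∈ (0,1), then C is additive 3α-robustly learnable. -/

import Mathlib

open scoped BigOperators ENNReal

namespace RobustDistLearn

variable {X : Type*}

/-- `p` is a probability mass function on `X`. -/
def IsPMF (p : X → ℝ) : Prop := (∀ x, 0 ≤ p x) ∧ ∑' x, p x = 1

/-- Total variation distance between two mass functions:
`d_TV(p,q) = (1/2)·∑ₓ |p x − q x|`. -/
noncomputable def dTV (p q : X → ℝ) : ℝ := (1 / 2) * ∑' x, |p x - q x|

/-- The probability, over a sample `S` of `n` i.i.d. draws from `p`, of the event `E`. -/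
noncomputable def iidProb (p : X → ℝ) (n : ℕ) (E : Set (Fin n → X)) : ℝ :=
  ∑' S : Fin n → X, E.indicator (fun T => ∏ i, p (T i)) S

/-- The mixture `η·q + (1−η)·p`. -/
def mix (η : ℝ) (q p : X → ℝ) : X → ℝ := fun x => η * q x + (1 - η) * p x

/-- `inf_{p' ∈ C} d_TV(p, p')`. -/
noncomputable def distToClass (p : X → ℝ) (C : Set (X → ℝ)) : ℝ := sInf (dTV p '' C)

/-- A learner maps, for each sample size `n`, a tuple `S ∈ Xⁿ` to a distribution over `X`. -/
def IsLearner (A : (n : ℕ) → (Fin n → X) → (X → ℝ)) : Prop := ∀ n S, IsPMF (A n S)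

/-- Realizable learnability of a class `C` of distributions. -/
def RealizablyLearnable (C : Set (X → ℝ)) : Prop :=
  ∃ A : (n : ℕ) → (Fin n → X) → (X → ℝ), IsLearner A ∧
    ∃ nC : ℝ → ℝ → ℕ,
      ∀ p ∈ C, ∀ ε ∈ Set.Ioo (0:ℝ) 1, ∀ δ ∈ Set.Ioo (0:ℝ) 1, ∀ n : ℕ, nC ε δ ≤ n →
        1 - δ ≤ iidProb p n {S | dTV (A n S) p ≤ ε}

/-- `α`-robust (agnostic) learnability. -/
def RobustlyLearnable (C : Set (X → ℝ)) (α : ℝ) : Prop :=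
  ∃ A : (n : ℕ) → (Fin n → X) → (X → ℝ), IsLearner A ∧
    ∃ nC : ℝ → ℝ → ℕ,
      ∀ p : X → ℝ, IsPMF p → ∀ ε ∈ Set.Ioo (0:ℝ) 1, ∀ δ ∈ Set.Ioo (0:ℝ) 1, ∀ n : ℕ, nC ε δ ≤ n →
        1 - δ ≤ iidProb p n {S | dTV (A n S) p ≤ α * distToClass p C + ε}

/-- Additive `α`-robust learnability. -/
def AdditiveRobustlyLearnable (C : Set (X → ℝ)) (α : ℝ) : Prop :=
  ∃ A : (n : ℕ) → (Fin n → X) → (X → ℝ), IsLearner A ∧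
    ∃ nC : ℝ → ℝ → ℕ,
      ∀ η ∈ Set.Ioo (0:ℝ) 1, ∀ q : X → ℝ, IsPMF q → ∀ p ∈ C,
        ∀ ε ∈ Set.Ioo (0:ℝ) 1, ∀ δ ∈ Set.Ioo (0:ℝ) 1, ∀ n : ℕ, nC ε δ ≤ n →
          1 - δ ≤ iidProb (mix η q p) n {S | dTV (A n S) (mix η q p) ≤ α * η + ε}

/-- Huber additive `α`-robust learnability: the guarantee is with respect to the clean `p`. -/
def HuberAdditiveRobustlyLearnable (C : Set (X → ℝ)) (α : ℝ) : Prop :=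
  ∃ A : (n : ℕ) → (Fin n → X) → (X → ℝ), IsLearner A ∧
    ∃ nC : ℝ → ℝ → ℕ,
      ∀ η ∈ Set.Ioo (0:ℝ) 1, ∀ q : X → ℝ, IsPMF q → ∀ p ∈ C,
        ∀ ε ∈ Set.Ioo (0:ℝ) 1, ∀ δ ∈ Set.Ioo (0:ℝ) 1, ∀ n : ℕ, nC ε δ ≤ n →
          1 - δ ≤ iidProb (mix η q p) n {S | dTV (A n S) p ≤ α * η + ε}

/-- Subtractive `α`-robust learnability. -/
def SubtractiveRobustlyLearnable (C : Set (X → ℝ)) (α : ℝ) : Prop :=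
  ∃ A : (n : ℕ) → (Fin n → X) → (X → ℝ), IsLearner A ∧
    ∃ nC : ℝ → ℝ → ℕ,
      ∀ η ∈ Set.Ioo (0:ℝ) 1, ∀ p : X → ℝ, IsPMF p →
        (∃ q : X → ℝ, IsPMF q ∧ mix η q p ∈ C) →
        ∀ ε ∈ Set.Ioo (0:ℝ) 1, ∀ δ ∈ Set.Ioo (0:ℝ) 1, ∀ n : ℕ, nC ε δ ≤ n →
          1 - δ ≤ iidProb p n {S | dTV (A n S) p ≤ α * η + ε}

/-- `η`-`α`-robust learnability (known corruption level `η`). -/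
def EtaRobustlyLearnable (C : Set (X → ℝ)) (η α : ℝ) : Prop :=
  ∃ A : (n : ℕ) → (Fin n → X) → (X → ℝ), IsLearner A ∧
    ∃ nC : ℝ → ℝ → ℕ,
      ∀ p : X → ℝ, IsPMF p → distToClass p C ≤ η →
        ∀ ε ∈ Set.Ioo (0:ℝ) 1, ∀ δ ∈ Set.Ioo (0:ℝ) 1, ∀ n : ℕ, nC ε δ ≤ n →
          1 - δ ≤ iidProb p n {S | dTV (A n S) p ≤ α * η + ε}

/-- `η`-additive `α`-robust learnability (known corruption level `η`). -/
def EtaAdditiveRobustlyLearnable (C : Set (X → ℝ)) (η α : ℝ) : Prop :=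
  ∃ A : (n : ℕ) → (Fin n → X) → (X → ℝ), IsLearner A ∧
    ∃ nC : ℝ → ℝ → ℕ,
      ∀ q : X → ℝ, IsPMF q → ∀ p ∈ C,
        ∀ ε ∈ Set.Ioo (0:ℝ) 1, ∀ δ ∈ Set.Ioo (0:ℝ) 1, ∀ n : ℕ, nC ε δ ≤ n →
          1 - δ ≤ iidProb (mix η q p) n {S | dTV (A n S) (mix η q p) ≤ α * η + ε}

/-- `η`-subtractive `α`-robust learnability (known corruption level `η`). -/
def EtaSubtractiveRobustlyLearnable (C : Set (X → ℝ)) (η α : ℝ) : Prop :=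
  ∃ A : (n : ℕ) → (Fin n → X) → (X → ℝ), IsLearner A ∧
    ∃ nC : ℝ → ℝ → ℕ,
      ∀ p : X → ℝ, IsPMF p →
        (∃ q : X → ℝ, IsPMF q ∧ mix η q p ∈ C) →
        ∀ ε ∈ Set.Ioo (0:ℝ) 1, ∀ δ ∈ Set.Ioo (0:ℝ) 1, ∀ n : ℕ, nC ε δ ≤ n →
          1 - δ ≤ iidProb p n {S | dTV (A n S) p ≤ α * η + ε}

/-- The probability of an event under a `PMF`. -/
noncomputable def pmfProb {Y : Type*} (m : PMF Y) (E : Set Y) : ℝ :=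
  (m.toOuterMeasure E).toReal

/-- `(ε,δ)`-differential privacy of a randomized algorithm on inputs of size `n`. -/
def IsDP {Y : Type*} {n : ℕ} (M : (Fin n → X) → PMF Y) (ε δ : ℝ) : Prop :=
  ∀ x x' : Fin n → X, (∃ i : Fin n, ∀ j : Fin n, j ≠ i → x j = x' j) →
    ∀ B : Set Y,
      (M x).toOuterMeasure B ≤
        ENNReal.ofReal (Real.exp ε) * (M x').toOuterMeasure B + ENNReal.ofReal δ

/-- Probability, jointly over `S ~ pⁿ` and the internal randomness of `M`, of the event `E`
on the output of `M`. -/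
noncomputable def randIidProb {Y : Type*} (p : X → ℝ) (n : ℕ)
    (M : (Fin n → X) → PMF Y) (E : Set Y) : ℝ :=
  ∑' S : Fin n → X, (∏ i, p (S i)) * pmfProb (M S) E

/-- Approximate DP learnability. -/
def ApproxDPLearnable (C : Set (X → ℝ)) : Prop :=
  ∃ Alg : (n : ℕ) → (Fin n → X) → PMF (X → ℝ),
    (∀ n S f, f ∈ (Alg n S).support → IsPMF f) ∧
    ∃ nC : ℝ → ℝ → ℝ → ℝ → ℕ,
      ∀ p ∈ C, ∀ α ∈ Set.Ioo (0:ℝ) 1, ∀ β ∈ Set.Ioo (0:ℝ) 1,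
        ∀ ε ∈ Set.Ioo (0:ℝ) 1, ∀ δ ∈ Set.Ioo (0:ℝ) 1, ∀ n : ℕ, nC α β ε δ ≤ n →
          IsDP (Alg n) ε δ ∧
          1 - β ≤ randIidProb p n (Alg n) {f | dTV p f ≤ α}

/-- Pure DP learnability. -/
def PureDPLearnable (C : Set (X → ℝ)) : Prop :=
  ∃ Alg : (n : ℕ) → (Fin n → X) → PMF (X → ℝ),
    (∀ n S f, f ∈ (Alg n S).support → IsPMF f) ∧
    ∃ nC : ℝ → ℝ → ℝ → ℕ,
      ∀ p ∈ C, ∀ α ∈ Set.Ioo (0:ℝ) 1, ∀ β ∈ Set.Ioo (0:ℝ) 1, ∀ ε ∈ Set.Ioo (0:ℝ) 1,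
        ∀ n : ℕ, nC α β ε ≤ n →
          IsDP (Alg n) ε 0 ∧
          1 - β ≤ randIidProb p n (Alg n) {f | dTV p f ≤ α}

/-- `α`-robust learnability by a possibly randomized learner. -/
def RandRobustlyLearnable (C : Set (X → ℝ)) (α : ℝ) : Prop :=
  ∃ Alg : (n : ℕ) → (Fin n → X) → PMF (X → ℝ),
    (∀ n S f, f ∈ (Alg n S).support → IsPMF f) ∧
    ∃ nC : ℝ → ℝ → ℕ,
      ∀ p : X → ℝ, IsPMF p → ∀ ε ∈ Set.Ioo (0:ℝ) 1, ∀ δ ∈ Set.Ioo (0:ℝ) 1,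
        ∀ n : ℕ, nC ε δ ≤ n →
          1 - δ ≤ randIidProb p n (Alg n) {f | dTV f p ≤ α * distToClass p C + ε}

/-- A class `C` admits `(τ, t, nf)` `r`-robust sample compression. -/
def AdmitsCompression (C : Set (X → ℝ)) (τ t nf : ℝ → ℕ) (r : ℝ) : Prop :=
  ∃ J : List X → List Bool → (X → ℝ),
    (∀ L B, J L B ∈ C) ∧
    ∀ q ∈ C, ∀ p : X → ℝ, IsPMF p → dTV p q ≤ r →
      ∀ ε ∈ Set.Ioo (0:ℝ) 1,
        (2 : ℝ) / 3 ≤ iidProb p (nf ε)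
          {S | ∃ L : List X, ∃ B : List Bool,
            L.length ≤ τ ε ∧ (∀ x ∈ L, ∃ i, S i = x) ∧ B.length ≤ t ε ∧
            dTV (J L B) q ≤ r + ε}

/-- The distribution `q_{i,j,k} = (1−1/j)·δ_{(0,0)} + (1/j − 1/k)·U_{A_i×{2j+1}} + (1/k)·δ_{(i,2j+2)}`
over `ℕ × ℕ`, for a given enumeration `A` of the finite nonempty subsets of `ℕ`. -/
noncomputable def qDist (A : ℕ → Finset ℕ) (i j k : ℕ) : ℕ × ℕ → ℝ := fun x =>
  (if x = (0, 0) then 1 - 1 / (j : ℝ) else 0) +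
  (if x.1 ∈ A i ∧ x.2 = 2 * j + 1 then (1 / (j : ℝ) - 1 / (k : ℝ)) / ((A i).card : ℝ) else 0) +
  (if x = (i, 2 * j + 2) then 1 / (k : ℝ) else 0)

/-- The class `Q_g = {q_{i,j,g(j)} : i, j ∈ ℕ, j ≥ 1}`. -/
def Qg (A : ℕ → Finset ℕ) (g : ℕ → ℕ) : Set (ℕ × ℕ → ℝ) :=
  {p | ∃ i j : ℕ, 1 ≤ j ∧ p = qDist A i j (g j)}

/-- The distribution `(1−γ)·δ_{(0,0)} + γ·U_{B×{2j+1}}` over `ℕ × ℕ`. -/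
noncomputable def pDist (γ : ℝ) (B : Finset ℕ) (j : ℕ) : ℕ × ℕ → ℝ := fun x =>
  (if x = (0, 0) then 1 - γ else 0) +
  (if x.1 ∈ B ∧ x.2 = 2 * j + 1 then γ / (B.card : ℝ) else 0)

/-- `g : ℕ → ℕ` is superlinear: `g(t)/t → ∞`. -/
def Superlinear (g : ℕ → ℕ) : Prop :=
  Filter.Tendsto (fun t : ℕ => (g t : ℝ) / (t : ℝ)) Filter.atTop Filter.atTop


/-! ### Auxiliary lemmas for Statement 15 -/

section Aux15

variable {X : Type*}

lemma IsPMF.summable {p : X → ℝ} (hp : IsPMF p) : Summable p := by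
  by_contra h
  have := tsum_eq_zero_of_not_summable h
  rw [hp.2] at this; norm_num at this

lemma aux15_summable_absdiff {p q : X → ℝ} (hp : Summable p) (hq : Summable q) :
    Summable (fun x => |p x - q x|) := by
  apply Summable.of_nonneg_of_le (fun x => abs_nonneg _) (fun x => abs_sub _ _)
  exact hp.abs.add hq.abs

lemma aux15_dTV_symm (p q : X → ℝ) : dTV p q = dTV q p := by
  unfold dTV; congr 1; exact tsum_congr fun x => abs_sub_comm _ _

lemma aux15_dTV_triangle {p q r : X → ℝ} (hp : Summable p) (hq : Summable q)
    (hr : Summable r) : dTV p r ≤ dTV p q + dTV q r := by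
  unfold dTV
  rw [← mul_add]
  apply mul_le_mul_of_nonneg_left _ (by norm_num)
  rw [← Summable.tsum_add (aux15_summable_absdiff hp hq) (aux15_summable_absdiff hq hr)]
  exact Summable.tsum_le_tsum (fun x => abs_sub_le _ _ _) (aux15_summable_absdiff hp hr)
    ((aux15_summable_absdiff hp hq).add (aux15_summable_absdiff hq hr))

lemma aux15_dTV_le_one {p q : X → ℝ} (hp : IsPMF p) (hq : IsPMF q) : dTV p q ≤ 1 := by
  unfold dTV
  have h1 : ∑' x, |p x - q x| ≤ ∑' x, (p x + q x) := by
    apply Summable.tsum_le_tsum _ (aux15_summable_absdiff hp.summable hq.summable)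
      (hp.summable.add hq.summable)
    intro x
    rw [abs_sub_le_iff]
    constructor <;> nlinarith [hp.1 x, hq.1 x]
  have h2 : ∑' x, (p x + q x) = 2 := by
    rw [Summable.tsum_add hp.summable hq.summable, hp.2, hq.2]; norm_num
  linarith

lemma aux15_mix_isPMF {η : ℝ} (h0 : 0 ≤ η) (h1 : η ≤ 1) {q p : X → ℝ}
    (hq : IsPMF q) (hp : IsPMF p) : IsPMF (mix η q p) := by
  constructor
  · intro x; have := hq.1 x; have := hp.1 x; unfold mix; nlinarith
  · unfold mix
    rw [Summable.tsum_add (hq.summable.mul_left _) (hp.summable.mul_left _),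
      tsum_mul_left, tsum_mul_left, hq.2, hp.2]
    ring

lemma aux15_mix_reparam {η r : ℝ} (hη : 0 ≤ η) (h0 : 0 < r) (hle : η ≤ r)
    {q p : X → ℝ} (hq : IsPMF q) (hp : IsPMF p) :
    ∃ q' : X → ℝ, IsPMF q' ∧ mix η q p = mix r q' p := by
  refine ⟨fun x => (η * q x + (r - η) * p x) / r, ⟨?_, ?_⟩, ?_⟩
  · intro x
    exact div_nonneg (by nlinarith [hq.1 x, hp.1 x]) h0.le
  · rw [tsum_div_const,
      Summable.tsum_add (hq.summable.mul_left _) (hp.summable.mul_left _),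
      tsum_mul_left, tsum_mul_left, hq.2, hp.2]
    field_simp
    ring
  · funext x
    unfold mix
    field_simp
    ring

set_option maxHeartbeats 1000000 in
lemma aux15_hasSum_prod_weight {p : X → ℝ} (h0 : ∀ x, 0 ≤ p x) (hs : HasSum p 1) :
    ∀ n : ℕ, HasSum (fun S : Fin n → X => ∏ i, p (S i)) 1 := by
  intro n
  induction n with
  | zero =>
      have h1 : (fun S : Fin 0 → X => ∏ i, p (S i)) = fun _ => 1 := by
        funext S; simp
      rw [h1]
      simpa using hasSum_unique (α := ℝ) (fun _ : Fin 0 → X => (1:ℝ))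
  | succ n ih =>
      have hsummul : Summable (fun z : X × (Fin n → X) => p z.1 * ∏ i, p (z.2 i)) :=
        Summable.mul_of_nonneg (f := p) (g := fun S : Fin n → X => ∏ i, p (S i))
          hs.summable ih.summable h0 (fun S => Finset.prod_nonneg fun i _ => h0 _)
      have hmul : HasSum (fun z : X × (Fin n → X) => p z.1 * ∏ i, p (z.2 i)) 1 := by
        have h3 := HasSum.mul hs ih hsummul
        rw [mul_one] at h3; exact h3
      set e : X × (Fin n → X) ≃ (Fin (n+1) → X) := Fin.consEquiv (fun _ => X) with he
      have hcomp : (fun S : Fin (n+1) → X => ∏ i, p (S i)) ∘ e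
          = fun z : X × (Fin n → X) => p z.1 * ∏ i, p (z.2 i) := by
        funext z
        simp [he, Fin.consEquiv, Fin.prod_univ_succ]
      exact e.hasSum_iff.mp (by rw [hcomp]; exact hmul)

section iid
variable {p : X → ℝ} (hp : IsPMF p) {n : ℕ}
include hp

private lemma aux15_w0 (S : Fin n → X) : 0 ≤ ∏ i, p (S i) :=
  Finset.prod_nonneg fun i _ => hp.1 _

private lemma aux15_wsum : HasSum (fun S : Fin n → X => ∏ i, p (S i)) 1 :=
  aux15_hasSum_prod_weight hp.1 (hp.2 ▸ hp.summable.hasSum) n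

lemma aux15_summable_indicator (E : Set (Fin n → X)) :
    Summable (E.indicator (fun T => ∏ i, p (T i))) :=
  Summable.of_nonneg_of_le (fun S => Set.indicator_nonneg (fun S _ => aux15_w0 hp S) S)
    (fun S => Set.indicator_le_self' (fun S _ => aux15_w0 hp S) S) (aux15_wsum hp).summable

lemma aux15_iidProb_univ : iidProb p n Set.univ = 1 := by
  unfold iidProb
  simp only [Set.indicator_univ]
  exact (aux15_wsum hp).tsum_eq

lemma aux15_iidProb_mono {E F : Set (Fin n → X)} (h : E ⊆ F) :
    iidProb p n E ≤ iidProb p n F :=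
  Summable.tsum_le_tsum (fun S => Set.indicator_le_indicator_of_subset h (fun S => aux15_w0 hp S) S)
    (aux15_summable_indicator hp E) (aux15_summable_indicator hp F)

lemma aux15_iidProb_add_compl (E : Set (Fin n → X)) :
    iidProb p n E + iidProb p n Eᶜ = 1 := by
  unfold iidProb
  rw [← Summable.tsum_add (aux15_summable_indicator hp E) (aux15_summable_indicator hp Eᶜ)]
  have h1 : ∀ S, E.indicator (fun T => ∏ i, p (T i)) S
      + Eᶜ.indicator (fun T => ∏ i, p (T i)) S = ∏ i, p (S i) := fun S =>
    congrFun (Set.indicator_self_add_compl E (fun T => ∏ i, p (T i))) S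
  rw [tsum_congr h1]
  exact (aux15_wsum hp).tsum_eq

lemma aux15_iidProb_union_disjoint {E F : Set (Fin n → X)} (h : Disjoint E F) :
    iidProb p n (E ∪ F) = iidProb p n E + iidProb p n F := by
  unfold iidProb
  rw [← Summable.tsum_add (aux15_summable_indicator hp E) (aux15_summable_indicator hp F)]
  exact tsum_congr fun S => congrFun (Set.indicator_union_of_disjoint h _) S

lemma aux15_iidProb_inter_ge {E F : Set (Fin n → X)} :
    iidProb p n E + iidProb p n F - 1 ≤ iidProb p n (E ∩ F) := by
  have h1 : iidProb p n (E ∩ F) + iidProb p n (E ∩ Fᶜ) = iidProb p n E := by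
    rw [← aux15_iidProb_union_disjoint hp (Set.disjoint_of_subset
      (Set.inter_subset_right) (Set.inter_subset_right) disjoint_compl_right)]
    congr 1
    rw [← Set.inter_union_distrib_left, Set.union_compl_self, Set.inter_univ]
  have h2 : iidProb p n (E ∩ Fᶜ) ≤ iidProb p n Fᶜ :=
    aux15_iidProb_mono hp Set.inter_subset_right
  have h3 := aux15_iidProb_add_compl hp F
  linarith

lemma aux15_iidProb_iInter_ge (J : Finset ℕ) (E : ℕ → Set (Fin n → X)) :
    1 - ∑ j ∈ J, (1 - iidProb p n (E j)) ≤ iidProb p n (⋂ j ∈ J, E j) := by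
  classical
  induction J using Finset.induction with
  | empty => simpa using (aux15_iidProb_univ hp (n := n)).ge
  | @insert a J ha ih =>
      rw [Finset.sum_insert ha]
      have hE : (⋂ j ∈ insert a J, E j) = E a ∩ ⋂ j ∈ J, E j := by
        simp
      rw [hE]
      have h2 := aux15_iidProb_inter_ge hp (E := E a) (F := ⋂ j ∈ J, E j)
      linarith

end iid

/-- Grid point `j · 2⁻ᵏ`. -/
noncomputable def aux15rr (k j : ℕ) : ℝ := (j : ℝ) * (1/2)^k

/-- All learners for grid level `k` have enough samples at sample size `n`. -/
def aux15gridOK (NCf : ℝ → ℝ → ℝ → ℕ) (k n : ℕ) : Prop :=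
  ∀ j ∈ Finset.Icc 1 (2^(k-1)), ∀ d ∈ Finset.Icc 1 k,
    NCf (aux15rr k j) ((1/2:ℝ)^k) ((1/2:ℝ)^(d+k-1)) ≤ n

open Classical in
/-- Grid level used at sample size `n`. -/
noncomputable def aux15m (NCf : ℝ → ℝ → ℝ → ℕ) (n : ℕ) : ℕ :=
  max 1 (Nat.findGreatest (fun k => aux15gridOK NCf k n) n)

/-- The selection criterion. -/
def aux15crit (α : ℝ) (A' : ℝ → (n : ℕ) → (Fin n → X) → (X → ℝ))
    (k n : ℕ) (S : Fin n → X) (j : ℕ) : Prop :=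
  j ∈ Finset.Icc 1 (2^(k-1)) ∧ ∀ j' ∈ Finset.Icc 1 (2^(k-1)), j ≤ j' →
    dTV (A' (aux15rr k j) n S) (A' (aux15rr k j') n S)
      ≤ α * (aux15rr k j + aux15rr k j') + 2*(1/2:ℝ)^k

open Classical in
/-- The combined learner. -/
noncomputable def aux15comb (α : ℝ) (A' : ℝ → (n : ℕ) → (Fin n → X) → (X → ℝ))
    (NCf : ℝ → ℝ → ℝ → ℕ) : (n : ℕ) → (Fin n → X) → (X → ℝ) := fun n S =>
  if H : ∃ j, aux15crit α A' (aux15m NCf n) n S j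
  then A' (aux15rr (aux15m NCf n) (Nat.find H)) n S
  else A' (aux15rr (aux15m NCf n) 1) n S

lemma aux15comb_isLearner {α : ℝ} {A' : ℝ → (n : ℕ) → (Fin n → X) → (X → ℝ)}
    (hL : ∀ r, IsLearner (A' r)) (NCf : ℝ → ℝ → ℝ → ℕ) :
    IsLearner (aux15comb α A' NCf) := by
  intro n S
  unfold aux15comb
  split
  · exact hL _ n S
  · exact hL _ n S

lemma aux15rr_mono {k j j' : ℕ} (h : j ≤ j') : aux15rr k j ≤ aux15rr k j' := by
  unfold aux15rr
  have : (j:ℝ) ≤ (j':ℝ) := by exact_mod_cast h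
  have h2 : (0:ℝ) < (1/2)^k := by positivity
  nlinarith

lemma aux15rr_le_half {k j : ℕ} (hk : 1 ≤ k) (hj : j ∈ Finset.Icc 1 (2^(k-1))) :
    aux15rr k j ≤ 1/2 := by
  rw [Finset.mem_Icc] at hj
  obtain ⟨k', rfl⟩ : ∃ k', k = k'+1 := ⟨k-1, (Nat.succ_pred_eq_of_pos hk).symm⟩
  have h1 : (j:ℝ) ≤ (2:ℝ)^k' := by
    have := hj.2
    simp only [Nat.add_sub_cancel] at this
    exact_mod_cast this
  have h2 : (2:ℝ)^k' * (1/2)^(k'+1) = 1/2 := by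
    rw [pow_succ, ← mul_assoc, ← mul_pow]; norm_num
  have h3 : (0:ℝ) < (1/2)^(k'+1) := by positivity
  unfold aux15rr
  nlinarith

lemma aux15rr_mem_Ioo {k j : ℕ} (hk : 1 ≤ k) (hj : j ∈ Finset.Icc 1 (2^(k-1))) :
    aux15rr k j ∈ Set.Ioo (0:ℝ) 1 := by
  constructor
  · rw [Finset.mem_Icc] at hj
    have : (0:ℝ) < (j:ℝ) := by exact_mod_cast hj.1
    unfold aux15rr
    positivity
  · linarith [aux15rr_le_half hk hj]

/-- Key deterministic selection lemma. -/
lemma aux15comb_close {α : ℝ} (hα : 1 ≤ α) {A' : ℝ → (n : ℕ) → (Fin n → X) → (X → ℝ)}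
    (hL : ∀ r, IsLearner (A' r)) (NCf : ℝ → ℝ → ℝ → ℕ) {n : ℕ} {S : Fin n → X}
    {D : X → ℝ} (hD : IsPMF D) {η : ℝ} (hη : 0 < η) (hhalf : η ≤ 1/2)
    (hS : ∀ j ∈ Finset.Icc 1 (2^(aux15m NCf n - 1)), η ≤ aux15rr (aux15m NCf n) j →
      dTV (A' (aux15rr (aux15m NCf n) j) n S) D
        ≤ α * aux15rr (aux15m NCf n) j + (1/2:ℝ)^(aux15m NCf n)) :
    dTV (aux15comb α A' NCf n S) D ≤ 3*α*η + 6*α*(1/2:ℝ)^(aux15m NCf n) := by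
  classical
  set k := aux15m NCf n with hkdef
  have hk1 : 1 ≤ k := le_max_left _ _
  have h2k : (2:ℝ)^k * (1/2)^k = 1 := by rw [← mul_pow]; norm_num
  have hppos : (0:ℝ) < (1/2)^k := by positivity
  have hα0 : (0:ℝ) < α := lt_of_lt_of_le one_pos hα
  -- the covering grid point j₀
  set j₀ := ⌈η * 2^k⌉₊ with hj₀def
  have hj₀1 : 1 ≤ j₀ := Nat.ceil_pos.mpr (by positivity)
  have h2kpos : (0:ℝ) < (2:ℝ)^k := by positivity
  have hhalfk : (2:ℝ)^(k-1) * 2 = 2^k := by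
    have hsp : k - 1 + 1 = k := Nat.succ_pred_eq_of_pos hk1
    rw [← pow_succ, hsp]
  have hj₀2 : j₀ ≤ 2^(k-1) := by
    rw [hj₀def, Nat.ceil_le]
    push_cast
    nlinarith [pow_pos (by norm_num : (0:ℝ) < 2) (k-1)]
  have hj₀Icc : j₀ ∈ Finset.Icc 1 (2^(k-1)) := Finset.mem_Icc.mpr ⟨hj₀1, hj₀2⟩
  have hle1 : η ≤ aux15rr k j₀ := by
    have h5 := Nat.le_ceil (η * 2^k)
    rw [← hj₀def] at h5
    unfold aux15rr
    nlinarith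
  have hle2 : aux15rr k j₀ ≤ η + (1/2)^k := by
    have h5 : (j₀ : ℝ) < η * 2^k + 1 := by
      rw [hj₀def]
      exact Nat.ceil_lt_add_one (by positivity)
    unfold aux15rr
    nlinarith
  -- the covering grid point satisfies the criterion
  have hcrit : aux15crit α A' k n S j₀ := by
    refine ⟨hj₀Icc, fun j' hj' hlej => ?_⟩
    have h1 := hS j₀ hj₀Icc hle1
    have h2 := hS j' hj' (le_trans hle1 (aux15rr_mono hlej))
    have tri := aux15_dTV_triangle ((hL _ n S).summable) hD.summable ((hL _ n S).summable)
      (q := D) (p := A' (aux15rr k j₀) n S) (r := A' (aux15rr k j') n S)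
    rw [aux15_dTV_symm D (A' (aux15rr k j') n S)] at tri
    linarith
  -- unfold the combined learner
  unfold aux15comb
  rw [← hkdef]
  split
  case isFalse h' => exact absurd ⟨j₀, hcrit⟩ h'
  case isTrue h' =>
    set js := Nat.find h' with hjs
    have hspec : aux15crit α A' k n S js := Nat.find_spec h'
    have hmin : js ≤ j₀ := Nat.find_min' h' hcrit
    have h3 := hspec.2 j₀ hj₀Icc hmin
    have h4 := hS j₀ hj₀Icc hle1
    have tri := aux15_dTV_triangle ((hL _ n S).summable) ((hL _ n S).summable) hD.summable
      (p := A' (aux15rr k js) n S) (q := A' (aux15rr k j₀) n S) (r := D)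
    have hmono : aux15rr k js ≤ aux15rr k j₀ := aux15rr_mono hmin
    nlinarith

end Aux15


/-- if `C` is `η`-additive `α`-robustly learnable for every
`η ∈ (0,1)`, then `C` is additive `3α`-robustly learnable. -/
theorem eta_additive_all_eta_implies_additive {X : Type*} [Countable X]
    (C : Set (X → ℝ)) (hC : ∀ p ∈ C, IsPMF p) (α : ℝ) (hα : 1 ≤ α)
    (h : ∀ η ∈ Set.Ioo (0:ℝ) 1, EtaAdditiveRobustlyLearnable C η α) :
    AdditiveRobustlyLearnable C (3 * α) := by
  classical
  simp only [EtaAdditiveRobustlyLearnable] at h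
  choose A hAL NC hNC using h
  have hα0 : (0:ℝ) < α := lt_of_lt_of_le one_pos hα
  have hhalfIoo : (1/2:ℝ) ∈ Set.Ioo (0:ℝ) 1 := by norm_num
  set A' : ℝ → (n : ℕ) → (Fin n → X) → (X → ℝ) := fun r =>
    if hr : r ∈ Set.Ioo (0:ℝ) 1 then A r hr else A (1/2) hhalfIoo with hA'def
  set NCf : ℝ → ℝ → ℝ → ℕ := fun r =>
    if hr : r ∈ Set.Ioo (0:ℝ) 1 then NC r hr else fun _ _ => 0 with hNCfdef
  have hA'L : ∀ r, IsLearner (A' r) := by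
    intro r
    rw [hA'def]
    dsimp only
    split
    · exact hAL _ _
    · exact hAL _ _
  have hA'G : ∀ r, ∀ hr : r ∈ Set.Ioo (0:ℝ) 1, ∀ q, IsPMF q → ∀ p ∈ C,
      ∀ ε ∈ Set.Ioo (0:ℝ) 1, ∀ δ ∈ Set.Ioo (0:ℝ) 1, ∀ n, NCf r ε δ ≤ n →
      1 - δ ≤ iidProb (mix r q p) n
        {S | dTV (A' r n S) (mix r q p) ≤ α * r + ε} := by
    intro r hr
    have h1 : A' r = A r hr := by rw [hA'def]; exact dif_pos hr
    have h2 : NCf r = NC r hr := by rw [hNCfdef]; exact dif_pos hr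
    rw [h1, h2]
    exact hNC r hr
  refine ⟨aux15comb α A' NCf, aux15comb_isLearner hA'L NCf, ?_⟩
  set Ψ : ℝ → ℝ → ℕ → Prop := fun ε δ N => ∀ n, N ≤ n →
      ∀ η ∈ Set.Ioo (0:ℝ) 1, ∀ q, IsPMF q → ∀ p ∈ C,
      1 - δ ≤ iidProb (mix η q p) n
        {S | dTV (aux15comb α A' NCf n S) (mix η q p) ≤ 3 * α * η + ε} with hΨdef
  have KEY : ∀ ε ∈ Set.Ioo (0:ℝ) 1, ∀ δ ∈ Set.Ioo (0:ℝ) 1, ∃ N, Ψ ε δ N := by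
    intro ε hε δ hδ
    obtain ⟨hε0, hε1⟩ := hε
    obtain ⟨hδ0, hδ1⟩ := hδ
    have hc0 : 0 < min (ε/(6*α)) δ := lt_min (by positivity) hδ0
    obtain ⟨k₁, hk₁⟩ := exists_pow_lt_of_lt_one hc0 (by norm_num : (1/2:ℝ) < 1)
    set k₀ := k₁ + 1 with hk₀def
    have hk₀1 : 1 ≤ k₀ := Nat.le_add_left 1 k₁
    have hk₀le : (1/2:ℝ)^k₀ ≤ min (ε/(6*α)) δ :=
      le_of_lt (lt_of_le_of_lt
        (pow_le_pow_of_le_one (by norm_num) (by norm_num) (Nat.le_succ k₁)) hk₁)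
    set N₀ := (Finset.Icc 1 (2^(k₀-1))).sup (fun j => (Finset.Icc 1 k₀).sup (fun d =>
        NCf (aux15rr k₀ j) ((1/2:ℝ)^k₀) ((1/2:ℝ)^(d+k₀-1)))) with hN₀def
    refine ⟨max k₀ N₀, ?_⟩
    rw [hΨdef]
    intro n hn η hη q hq p hpC
    have hppmf : IsPMF p := hC p hpC
    -- grid is good at level k₀, hence at level `aux15m NCf n ≥ k₀`
    have hgridk₀ : aux15gridOK NCf k₀ n := by
      intro j hj d hd
      have h1 : NCf (aux15rr k₀ j) ((1/2:ℝ)^k₀) ((1/2:ℝ)^(d+k₀-1))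
          ≤ (Finset.Icc 1 k₀).sup (fun d =>
              NCf (aux15rr k₀ j) ((1/2:ℝ)^k₀) ((1/2:ℝ)^(d+k₀-1))) := by
        apply Finset.le_sup hd
      have h2 : (Finset.Icc 1 k₀).sup (fun d =>
          NCf (aux15rr k₀ j) ((1/2:ℝ)^k₀) ((1/2:ℝ)^(d+k₀-1))) ≤ N₀ := by
        rw [hN₀def]
        apply Finset.le_sup hj
      have h3 : N₀ ≤ n := le_trans (le_max_right _ _) hn
      omega
    have hMge : k₀ ≤ Nat.findGreatest (fun k => aux15gridOK NCf k n) n :=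
      Nat.le_findGreatest (le_trans (le_max_left _ _) hn) hgridk₀
    set k := aux15m NCf n with hkdef
    have hk1 : 1 ≤ k := le_max_left _ _
    have hkk₀ : k₀ ≤ k := le_trans hMge (le_max_right _ _)
    have hgrid : aux15gridOK NCf k n := by
      rw [hkdef]
      unfold aux15m
      rw [max_eq_right (le_trans hk₀1 hMge)]
      exact Nat.findGreatest_spec (P := fun k => aux15gridOK NCf k n) (le_trans (le_max_left _ _) hn) hgridk₀
    have hεk : (1/2:ℝ)^k ≤ min (ε/(6*α)) δ :=
      le_trans (pow_le_pow_of_le_one (by norm_num) (by norm_num) hkk₀) hk₀le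
    set D := mix η q p with hDdef
    have hDpmf : IsPMF D := aux15_mix_isPMF hη.1.le hη.2.le hq hppmf
    have hppos : (0:ℝ) < (1/2:ℝ)^k := by positivity
    have hplt1 : (1/2:ℝ)^k < 1 :=
      pow_lt_one₀ (by norm_num) (by norm_num) (by omega)
    by_cases hbig : (1/2:ℝ) < η
    · -- for large η anything within TV distance 1 works
      have huniv : {S : Fin n → X | dTV (aux15comb α A' NCf n S) D ≤ 3*α*η + ε}
          = Set.univ := by
        apply Set.eq_univ_of_forall
        intro S
        have h1 : dTV (aux15comb α A' NCf n S) D ≤ 1 :=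
          aux15_dTV_le_one (aux15comb_isLearner hA'L NCf n S) hDpmf
        have h2 : (1:ℝ) ≤ 3*α*η + ε := by nlinarith
        simp only [Set.mem_setOf_eq]
        linarith
      rw [huniv, aux15_iidProb_univ hDpmf]
      linarith
    · push_neg at hbig
      set E : ℕ → Set (Fin n → X) := fun j =>
        {S | dTV (A' (aux15rr k j) n S) D ≤ α * aux15rr k j + (1/2:ℝ)^k} with hEdef
      set J := (Finset.Icc 1 (2^(k-1))).filter (fun j => η ≤ aux15rr k j) with hJdef
      have hδ'pos : (0:ℝ) < (1/2:ℝ)^(k₀+k-1) := by positivity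
      have hδ'lt1 : (1/2:ℝ)^(k₀+k-1) < 1 :=
        pow_lt_one₀ (by norm_num) (by norm_num) (by omega)
      have hEj : ∀ j ∈ J, 1 - (1/2:ℝ)^(k₀+k-1) ≤ iidProb D n (E j) := by
        intro j hj
        rw [hJdef, Finset.mem_filter] at hj
        obtain ⟨hjIcc, hjη⟩ := hj
        have hrIoo : aux15rr k j ∈ Set.Ioo (0:ℝ) 1 := aux15rr_mem_Ioo hk1 hjIcc
        obtain ⟨q', hq', hDeq⟩ := aux15_mix_reparam hη.1.le hrIoo.1 hjη hq hppmf
        have hnn := hA'G (aux15rr k j) hrIoo q' hq' p hpC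
          ((1/2:ℝ)^k) ⟨hppos, hplt1⟩ ((1/2:ℝ)^(k₀+k-1)) ⟨hδ'pos, hδ'lt1⟩ n
          (hgrid j hjIcc k₀ (Finset.mem_Icc.mpr ⟨hk₀1, hkk₀⟩))
        rw [← hDeq] at hnn
        exact hnn
      have hinter := aux15_iidProb_iInter_ge hDpmf J E
      have hcard : (J.card : ℝ) ≤ 2^(k-1) := by
        have h1 : J.card ≤ (Finset.Icc 1 (2^(k-1))).card := by
          rw [hJdef]; exact Finset.card_filter_le _ _
        have h2 : (Finset.Icc 1 (2^(k-1))).card = 2^(k-1) := by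
          rw [Nat.card_Icc]
          exact Nat.add_sub_cancel _ _
        have h3 : J.card ≤ 2^(k-1) := h2 ▸ h1
        exact_mod_cast h3
      have h2km1 : (2:ℝ)^(k-1) * (1/2:ℝ)^(k-1) = 1 := by
        rw [← mul_pow]; norm_num
      have hsumle : ∑ j ∈ J, (1 - iidProb D n (E j)) ≤ δ := by
        have hstep : ∑ j ∈ J, (1 - iidProb D n (E j)) ≤ ∑ _j ∈ J, (1/2:ℝ)^(k₀+k-1) :=
          Finset.sum_le_sum fun j hj => by linarith [hEj j hj]
        have hcount : ∑ _j ∈ J, (1/2:ℝ)^(k₀+k-1) = (J.card : ℝ) * (1/2:ℝ)^(k₀+k-1) := by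
          rw [Finset.sum_const, nsmul_eq_mul]
        have hsplit : (k₀ + k - 1) = k₀ + (k-1) := by omega
        have hval : (2:ℝ)^(k-1) * (1/2:ℝ)^(k₀+k-1) = (1/2:ℝ)^k₀ := by
          rw [hsplit, pow_add, mul_comm ((1/2:ℝ)^k₀) _, ← mul_assoc, h2km1, one_mul]
        have hfin : (J.card : ℝ) * (1/2:ℝ)^(k₀+k-1) ≤ (1/2:ℝ)^k₀ := by
          rw [← hval]
          exact mul_le_mul_of_nonneg_right hcard hδ'pos.le
        have hδfin : (1/2:ℝ)^k₀ ≤ δ := le_trans hk₀le (min_le_right _ _)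
        linarith
      have hsub : (⋂ j ∈ J, E j)
          ⊆ {S : Fin n → X | dTV (aux15comb α A' NCf n S) D ≤ 3*α*η + ε} := by
        intro S hS
        simp only [Set.mem_iInter] at hS
        have hSgood : ∀ j ∈ Finset.Icc 1 (2^(k-1)), η ≤ aux15rr k j →
            dTV (A' (aux15rr k j) n S) D ≤ α * aux15rr k j + (1/2:ℝ)^k := by
          intro j hj hjη
          have := hS j (by rw [hJdef]; exact Finset.mem_filter.mpr ⟨hj, hjη⟩)
          rw [hEdef] at this
          exact this
        have hclose := aux15comb_close hα hA'L NCf hDpmf hη.1 hbig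
          (by rw [← hkdef]; exact hSgood)
        rw [← hkdef] at hclose
        have h6 : 6*α*(1/2:ℝ)^k ≤ ε := by
          have h1 : (1/2:ℝ)^k ≤ ε/(6*α) := le_trans hεk (min_le_left _ _)
          rw [le_div_iff₀ (by positivity)] at h1
          nlinarith
        simp only [Set.mem_setOf_eq]
        linarith
      calc (1:ℝ) - δ ≤ 1 - ∑ j ∈ J, (1 - iidProb D n (E j)) := by linarith
        _ ≤ iidProb D n (⋂ j ∈ J, E j) := hinter
        _ ≤ iidProb D n {S : Fin n → X | dTV (aux15comb α A' NCf n S) D ≤ 3*α*η + ε} :=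
            aux15_iidProb_mono hDpmf hsub
  refine ⟨fun ε δ => if hx : ∃ N, Ψ ε δ N then hx.choose else 0, ?_⟩
  intro η hη q hq p hpC ε hε δ hδ n hn
  have hx : ∃ N, Ψ ε δ N := KEY ε hε δ hδ
  have hn' : (if hx : ∃ N, Ψ ε δ N then hx.choose else 0) ≤ n := hn
  rw [dif_pos hx] at hn'
  exact hx.choose_spec n hn' η hη q hq p hpC


end RobustDistLearn
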